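/- Let G be a properly edge-coloured digraph, and let P be a rainbow directed path in G of maximum length ℓ ending at vertex v. Then the number of out-edges of v whose colour does not appear on P is at most ℓ, and consequently ℓ ≥ δ⁺(G)/2. -/

import Mathlib

/-- A proper edge-colouring of a digraph: no two edges with a common start-vertex and
no two edges with a common end-vertex share a colour. -/
def ProperDiColoring {V C : Type*} (E : V → V → Prop) (c : V → V → C) : Prop :=
  (∀ u v w, E u v → E u w → c u v = c u w → v = w) ∧
  (∀ u v w, E u v → E w v → c u v = c w v → u = w)

/-- A rainbow directed path of length `ℓ`. -/
def IsRainbowDiPath {V C : Type*} (E : V → V → Prop) (c : V → V → C) {ℓ : ℕ}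
    (p : Fin (ℓ + 1) → V) : Prop :=
  Function.Injective p ∧ (∀ i : Fin ℓ, E (p i.castSucc) (p i.succ)) ∧
    Function.Injective fun i : Fin ℓ => c (p i.castSucc) (p i.succ)

/-- Let `P` be a rainbow directed path of maximum length `ℓ` in a properly
edge-coloured digraph with minimum out-degree at least `d`, ending at vertex `v`.
Then the number of out-edges of `v` whose colour does not appear on `P` is at most
`ℓ`, and consequently `ℓ ≥ d/2`. -/
lemma snoc_inj {n : ℕ} {α : Type*} {f : Fin n → α} {x : α}
    (hf : Function.Injective f) (hx : x ∉ Set.range f) :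
    Function.Injective (Fin.snoc f x : Fin (n + 1) → α) := by
  intro i j h
  induction i using Fin.lastCases with
  | last =>
    induction j using Fin.lastCases with
    | last => rfl
    | cast j =>
      simp only [Fin.snoc_last, Fin.snoc_castSucc] at h
      exact absurd ⟨j, h.symm⟩ hx
  | cast i =>
    induction j using Fin.lastCases with
    | last =>
      simp only [Fin.snoc_last, Fin.snoc_castSucc] at h
      exact absurd ⟨i, h⟩ hx
    | cast j =>
      simp only [Fin.snoc_castSucc] at h
      exact congrArg Fin.castSucc (hf h)

theorem stmt6 {V C : Type*} [Fintype V]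
    (E : V → V → Prop) (c : V → V → C)
    (hloopless : ∀ v, ¬ E v v) (hproper : ProperDiColoring E c)
    (d : ℕ) (hdeg : ∀ v, d ≤ {w | E v w}.ncard)
    (ℓ : ℕ) (p : Fin (ℓ + 1) → V) (hp : IsRainbowDiPath E c p)
    (hmax : ∀ (ℓ' : ℕ) (q : Fin (ℓ' + 1) → V), IsRainbowDiPath E c q → ℓ' ≤ ℓ) :
    {w | E (p (Fin.last ℓ)) w ∧
        c (p (Fin.last ℓ)) w ∉
          Set.range fun i : Fin ℓ => c (p i.castSucc) (p i.succ)}.ncard ≤ ℓ ∧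
      d ≤ 2 * ℓ := by
  obtain ⟨hinj, hedge, hcol⟩ := hp
  set v := p (Fin.last ℓ) with hv
  set col : Fin ℓ → C := fun i => c (p i.castSucc) (p i.succ) with hcolf
  -- key claim
  have key : {w | E v w ∧ c v w ∉ Set.range col} ⊆
      Set.range (fun i : Fin ℓ => p i.castSucc) := by
    rintro w ⟨hEw, hcw⟩
    by_cases hwr : w ∈ Set.range p
    · obtain ⟨j, rfl⟩ := hwr
      rcases Fin.eq_castSucc_or_eq_last j with ⟨i, rfl⟩ | rfl
      · exact ⟨i, rfl⟩
      · exact absurd hEw (hloopless _)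
    · exfalso
      set q : Fin (ℓ + 1 + 1) → V := Fin.snoc p w with hq
      have hcs : (fun i : Fin (ℓ + 1) => c (q i.castSucc) (q i.succ)) =
          Fin.snoc col (c v w) := by
        funext i
        induction i using Fin.lastCases with
        | last =>
          simp [hq, Fin.succ_last, Fin.snoc_castSucc, Fin.snoc_last, hv]
        | cast i =>
          simp [hq, Fin.succ_castSucc, Fin.snoc_castSucc, hcolf, -Fin.castSucc_succ]
      have hrp : IsRainbowDiPath E c q := by
        refine ⟨snoc_inj hinj hwr, ?_, ?_⟩
        · intro i
          induction i using Fin.lastCases with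
          | last =>
            simpa [hq, Fin.succ_last, Fin.snoc_castSucc, Fin.snoc_last, hv] using hEw
          | cast i =>
            simpa [hq, Fin.succ_castSucc, Fin.snoc_castSucc, -Fin.castSucc_succ] using hedge i
        · rw [hcs]
          exact snoc_inj hcol hcw
      exact absurd (hmax (ℓ + 1) q hrp) (by omega)
  have hrange : (Set.range (fun i : Fin ℓ => p i.castSucc)).ncard = ℓ := by
    rw [← Nat.card_coe_set_eq, Nat.card_range_of_injective
      (f := fun i : Fin ℓ => p i.castSucc)
      (fun i j h => Fin.castSucc_injective _ (hinj h))]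
    simp
  have h1 : {w | E v w ∧ c v w ∉ Set.range col}.ncard ≤ ℓ :=
    le_trans (Set.ncard_le_ncard key (Set.toFinite _)) (le_of_eq hrange)
  refine ⟨h1, ?_⟩
  have hcolrange : (Set.range col).ncard = ℓ := by
    rw [← Nat.card_coe_set_eq, Nat.card_range_of_injective hcol]
    simp
  have h2 : {w | E v w ∧ c v w ∈ Set.range col}.ncard ≤ ℓ :=
    le_trans (Set.ncard_le_ncard_of_injOn (fun w => c v w) (fun w hw => hw.2)
      (fun w hw w' hw' h => hproper.1 v w w' hw.1 hw'.1 h) (Set.toFinite _))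
      (le_of_eq hcolrange)
  have hsub : {w | E v w} ⊆
      {w | E v w ∧ c v w ∈ Set.range col} ∪ {w | E v w ∧ c v w ∉ Set.range col} := by
    intro w hw
    by_cases h : c v w ∈ Set.range col
    · exact Or.inl ⟨hw, h⟩
    · exact Or.inr ⟨hw, h⟩
  calc d ≤ {w | E v w}.ncard := hdeg v
    _ ≤ ({w | E v w ∧ c v w ∈ Set.range col} ∪
          {w | E v w ∧ c v w ∉ Set.range col}).ncard :=
        Set.ncard_le_ncard hsub (Set.toFinite _)
    _ ≤ {w | E v w ∧ c v w ∈ Set.range col}.ncard +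
          {w | E v w ∧ c v w ∉ Set.range col}.ncard := Set.ncard_union_le _ _
    _ ≤ 2 * ℓ := by omega
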